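/- Let C be a triangulated category equipped with a weight structure w, let m ≤ l be integers, and let g : M → M' be a morphism in C. Then for any m-weight decomposition w_{≤m}M → M → w_{≥m+1}M → (w_{≤m}M)[1] of M and any l-weight decomposition w_{≤l}M' → M' → w_{≥l+1}M' → (w_{≤l}M')[1] of M' there exist morphisms h : w_{≤m}M → w_{≤l}M' and j : w_{≥m+1}M → w_{≥l+1}M' such that (h, g, j) is a morphism of distinguished triangles. Moreover, if m < l then the pair (h, j) with this property is unique. -/

import Mathlib

open CategoryTheory CategoryTheory.Limits CategoryTheory.Pretriangulated ZeroObject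

universe v u

variable (C : Type u) [Category.{v} C] [HasZeroObject C] [Preadditive C] [HasShift C ℤ]
  [∀ n : ℤ, (shiftFunctor C n).Additive] [Pretriangulated C]

/-- A weight structure on a triangulated category `C`: a pair of retract-closed classes
`le = C_{w≤0}` and `ge = C_{w≥0}` satisfying semi-invariance with respect to translations,
orthogonality, and the existence of weight decompositions. -/
structure WeightStructure where
  /-- the class `C_{w≤0}` -/
  le : Set C
  /-- the class `C_{w≥0}` -/
  ge : Set C
  /-- `C_{w≤0}` is closed under retracts -/
  le_retract : ∀ ⦃X Y : C⦄ (i : X ⟶ Y) (r : Y ⟶ X), i ≫ r = 𝟙 X → le Y → le X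
  /-- `C_{w≥0}` is closed under retracts -/
  ge_retract : ∀ ⦃X Y : C⦄ (i : X ⟶ Y) (r : Y ⟶ X), i ≫ r = 𝟙 X → ge Y → ge X
  /-- `C_{w≤0} ⊆ C_{w≤0}[1]`, i.e. `X ∈ C_{w≤0} → X[-1] ∈ C_{w≤0}` -/
  le_shift : ∀ ⦃X : C⦄, le X → le ((shiftFunctor C (-1 : ℤ)).obj X)
  /-- `C_{w≥0}[1] ⊆ C_{w≥0}`, i.e. `X ∈ C_{w≥0} → X[1] ∈ C_{w≥0}` -/
  ge_shift : ∀ ⦃X : C⦄, ge X → ge ((shiftFunctor C (1 : ℤ)).obj X)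
  /-- orthogonality: `Hom(X, Y[1]) = 0` for `X ∈ C_{w≤0}`, `Y ∈ C_{w≥0}` -/
  orth : ∀ ⦃X Y : C⦄, le X → ge Y → ∀ f : X ⟶ (shiftFunctor C (1 : ℤ)).obj Y, f = 0
  /-- existence of weight decompositions -/
  decomp : ∀ M : C, ∃ (X Y : C) (f : X ⟶ M) (g : M ⟶ Y)
      (h : Y ⟶ (shiftFunctor C (1 : ℤ)).obj X),
      Triangle.mk f g h ∈ (distTriang C) ∧ le X ∧ ge ((shiftFunctor C (-1 : ℤ)).obj Y)

variable {C}

namespace WeightStructure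

/-- `X ∈ C_{w≤i} = C_{w≤0}[i]`, i.e. `X[-i] ∈ C_{w≤0}`. -/
def leDeg (w : WeightStructure C) (i : ℤ) (X : C) : Prop :=
  w.le ((shiftFunctor C (-i)).obj X)

/-- `X ∈ C_{w≥i} = C_{w≥0}[i]`, i.e. `X[-i] ∈ C_{w≥0}`. -/
def geDeg (w : WeightStructure C) (i : ℤ) (X : C) : Prop :=
  w.ge ((shiftFunctor C (-i)).obj X)

/-- The triangle `A → M → B → A[1]` is an `m`-weight decomposition of `M`:
it is distinguished, `A ∈ C_{w≤m}` and `B ∈ C_{w≥m+1}`. -/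
def IsWeightDecomp (w : WeightStructure C) (m : ℤ) {A M B : C}
    (f : A ⟶ M) (g : M ⟶ B) (h : B ⟶ (shiftFunctor C (1 : ℤ)).obj A) : Prop :=
  Triangle.mk f g h ∈ (distTriang C) ∧ w.leDeg m A ∧ w.geDeg (m + 1) B

/-- `g : M ⟶ N` kills weights `m,…,n`: there exist an `n`-weight decomposition of `M` and an
`(m-1)`-weight decomposition of `N` such that the composite `w_{≤n}M → M → N → w_{≥m}N` is `0`. -/
def KillsWeights (w : WeightStructure C) (m n : ℤ) {M N : C} (g : M ⟶ N) : Prop :=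
  ∃ (A B A' B' : C) (f : A ⟶ M) (p : M ⟶ B) (δ : B ⟶ (shiftFunctor C (1 : ℤ)).obj A)
    (f' : A' ⟶ N) (p' : N ⟶ B') (δ' : B' ⟶ (shiftFunctor C (1 : ℤ)).obj A'),
    w.IsWeightDecomp n f p δ ∧ w.IsWeightDecomp (m - 1) f' p' δ' ∧ f ≫ g ≫ p' = 0

/-- `M` is without weights `m,…,n` if `𝟙 M` kills weights `m,…,n`. -/
def WithoutWeights (w : WeightStructure C) (m n : ℤ) (M : C) : Prop :=
  w.KillsWeights m n (𝟙 M)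

end WeightStructure


namespace WeightStructure

lemma ge_iso (w : WeightStructure C) {X Y : C} (e : X ≅ Y) (h : w.ge X) : w.ge Y :=
  w.ge_retract e.inv e.hom (by simp) h

lemma le_iso (w : WeightStructure C) {X Y : C} (e : X ≅ Y) (h : w.le X) : w.le Y :=
  w.le_retract e.inv e.hom (by simp) h

lemma ge_shift_nat (w : WeightStructure C) {X : C} (h : w.ge X) (n : ℕ) :
    w.ge ((shiftFunctor C (n : ℤ)).obj X) := by
  induction n with
  | zero => exact w.ge_iso ((shiftFunctorZero C ℤ).app X).symm h
  | succ n ih =>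
      exact w.ge_iso (((shiftFunctorAdd' C (n : ℤ) 1 ((n + 1 : ℕ) : ℤ)
        (by push_cast; ring)).app X).symm) (w.ge_shift ih)

lemma geDeg_shift (w : WeightStructure C) {a : ℤ} {X : C} (h : w.geDeg a X) (n b : ℤ)
    (hb : a + n = b) : w.geDeg b ((shiftFunctor C n).obj X) :=
  w.ge_iso ((shiftFunctorAdd' C n (-b) (-a) (by omega)).app X) h

lemma leDeg_shift (w : WeightStructure C) {a : ℤ} {X : C} (h : w.leDeg a X) (n b : ℤ)
    (hb : a + n = b) : w.leDeg b ((shiftFunctor C n).obj X) :=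
  w.le_iso ((shiftFunctorAdd' C n (-b) (-a) (by omega)).app X) h

lemma geDeg_mono (w : WeightStructure C) {a b : ℤ} (h : a ≤ b) {Y : C}
    (hY : w.geDeg b Y) : w.geDeg a Y := by
  have hn : ((b - a).toNat : ℤ) = b - a := Int.toNat_of_nonneg (by omega)
  have h1 := w.ge_shift_nat hY (b - a).toNat
  rw [hn] at h1
  exact w.ge_iso ((shiftFunctorAdd' C (-b) (b - a) (-a) (by omega)).app Y).symm h1

lemma hom_eq_zero (w : WeightStructure C) {a b : ℤ} (hab : a < b) {X Y : C}
    (hX : w.leDeg a X) (hY : w.geDeg b Y) (φ : X ⟶ Y) : φ = 0 := by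
  have hb1 : w.geDeg (a + 1) Y := w.geDeg_mono (by omega) hY
  have hZ' : w.ge ((shiftFunctor C (-(a + 1) : ℤ)).obj Y) := hb1
  have e : (shiftFunctor C (-a : ℤ)).obj Y ≅
      (shiftFunctor C (1 : ℤ)).obj ((shiftFunctor C (-(a + 1) : ℤ)).obj Y) :=
    (shiftFunctorAdd' C (-(a+1)) 1 (-a) (by ring)).app Y
  have h0 : (shiftFunctor C (-a : ℤ)).map φ ≫ e.hom = 0 := w.orth hX hZ' _
  have h1 : (shiftFunctor C (-a : ℤ)).map φ = 0 := by
    have h2 := h0 =≫ e.inv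
    simpa using h2
  exact (shiftFunctor C (-a : ℤ)).map_injective (by simp [h1])

end WeightStructure

/-- Proposition 1.2.1(5): any `g : M ⟶ M'` extends to a morphism of distinguished triangles
between any `m`-weight decomposition of `M` and any `l`-weight decomposition of `M'` (for
`m ≤ l`); the extension is unique if `m < l`. -/
theorem exists_triangle_morphism_of_weightDecomp (w : WeightStructure C) (m l : ℤ) (hml : m ≤ l)
    {M M' : C} (g : M ⟶ M')
    {A B : C} (f : A ⟶ M) (p : M ⟶ B) (δ : B ⟶ (shiftFunctor C (1 : ℤ)).obj A)
    (hd : w.IsWeightDecomp m f p δ)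
    {A' B' : C} (f' : A' ⟶ M') (p' : M' ⟶ B') (δ' : B' ⟶ (shiftFunctor C (1 : ℤ)).obj A')
    (hd' : w.IsWeightDecomp l f' p' δ') :
    (∃ (h : A ⟶ A') (j : B ⟶ B'),
      f ≫ g = h ≫ f' ∧ p ≫ j = g ≫ p' ∧
      δ ≫ (shiftFunctor C (1 : ℤ)).map h = j ≫ δ') ∧
    (m < l → ∀ (h₁ h₂ : A ⟶ A') (j₁ j₂ : B ⟶ B'),
      (f ≫ g = h₁ ≫ f' ∧ p ≫ j₁ = g ≫ p' ∧
        δ ≫ (shiftFunctor C (1 : ℤ)).map h₁ = j₁ ≫ δ') →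
      (f ≫ g = h₂ ≫ f' ∧ p ≫ j₂ = g ≫ p' ∧
        δ ≫ (shiftFunctor C (1 : ℤ)).map h₂ = j₂ ≫ δ') →
      h₁ = h₂ ∧ j₁ = j₂) := by
  obtain ⟨hT, hA, hB⟩ := hd
  obtain ⟨hT', hA', hB'⟩ := hd'
  have hzero : f ≫ g ≫ p' = 0 := by
    rw [← Category.assoc]
    exact w.hom_eq_zero (by omega) hA hB' _
  constructor
  · -- existence
    obtain ⟨h, hh⟩ := Triangle.coyoneda_exact₂ _ hT' (f ≫ g) (by rw [← Category.assoc] at hzero; exact hzero)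
    obtain ⟨j, hj₁, hj₂⟩ := Pretriangulated.complete_distinguished_triangle_morphism
      (Triangle.mk f p δ) (Triangle.mk f' p' δ') hT hT' h g hh
    exact ⟨h, j, hh, hj₁, hj₂⟩
  · -- uniqueness
    intro hlt h₁ h₂ j₁ j₂ ⟨e₁, e₂, e₃⟩ ⟨e₁', e₂', e₃'⟩
    constructor
    · have hf : (h₁ - h₂) ≫ f' = 0 := by
        rw [Preadditive.sub_comp, ← e₁, ← e₁', sub_self]
      obtain ⟨a, ha⟩ := Triangle.coyoneda_exact₂ _ (inv_rot_of_distTriang _ hT')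
        (h₁ - h₂) (by exact hf)
      have ha0 : a = 0 := w.hom_eq_zero hlt hA
        (w.geDeg_shift hB' (-1) l (by ring)) a
      rw [ha0, zero_comp] at ha
      exact sub_eq_zero.mp ha
    · have hp : p ≫ (j₁ - j₂) = 0 := by
        rw [Preadditive.comp_sub, e₂, e₂', sub_self]
      obtain ⟨a, ha⟩ := Triangle.yoneda_exact₃ _ hT (j₁ - j₂) hp
      have ha0 : a = 0 := w.hom_eq_zero (by omega)
        (w.leDeg_shift hA 1 (m+1) rfl) hB' a
      rw [ha0, comp_zero] at ha
      exact sub_eq_zero.mp ha
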